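/- Let Σ be a positive-definite d×d real matrix with positive-definite square root Σ^{1/2}, let μ̄ ∈ ℝ^d be a unit vector (‖μ̄‖ = 1), and set μ = Σ^{1/2} μ̄ and v = Σ^{-1/2} μ̄. Define the Gaussian densities f(x) = (2π)^{-d/2} (det Σ)^{-1/2} exp(−xᵀ Σ⁻¹ x / 2), f_mix(x) = (1/2)·(2π)^{-d/2} (det Σ)^{-1/2} [exp(−(x−μ)ᵀ Σ⁻¹ (x−μ)/2) + exp(−(x+μ)ᵀ Σ⁻¹ (x+μ)/2)], and f̄(x) = (1/2)(f(x) + f_mix(x)). Then for every x ∈ ℝ^d with |xᵀ v| > 3/2, one has f(x) < f̄(x). -/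
import Mathlib


open Matrix Real

/-- Gaussian density on `ℝ^d` with mean `m` and covariance matrix `Sg`. -/
noncomputable def gaussDensity {d : ℕ} (Sg : Matrix (Fin d) (Fin d) ℝ)
    (m x : Fin d → ℝ) : ℝ :=
  (2 * π) ^ (-(d : ℝ) / 2) * Sg.det ^ (-(1 : ℝ) / 2) *
    Real.exp (-((x - m) ⬝ᵥ Sg⁻¹.mulVec (x - m)) / 2)

theorem stmt_0 {d : ℕ} (hd : 1 ≤ d)
    (Sg S : Matrix (Fin d) (Fin d) ℝ)
    (hSg : Sg.PosDef) (hS : S.PosDef) (hSS : S * S = Sg)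
    (μbar : Fin d → ℝ) (hμbar : μbar ⬝ᵥ μbar = 1)
    (μ v : Fin d → ℝ) (hμ : μ = S.mulVec μbar) (hv : v = (S⁻¹).mulVec μbar)
    (f fmix fbar : (Fin d → ℝ) → ℝ)
    (hf : f = gaussDensity Sg 0)
    (hfmix : fmix = fun x => (1 / 2) * (gaussDensity Sg μ x + gaussDensity Sg (-μ) x))
    (hfbar : fbar = fun x => (1 / 2) * (f x + fmix x)) :
    ∀ x : Fin d → ℝ, |x ⬝ᵥ v| > 3 / 2 → f x < fbar x := by
  intro x hx
  subst hf hfmix hfbar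
  have hSdet : IsUnit S.det := isUnit_iff_ne_zero.mpr (ne_of_gt hS.det_pos)
  have hSinv : S⁻¹ * S = 1 := Matrix.nonsing_inv_mul S hSdet
  have hSsymm : Sᵀ = S := hS.isHermitian.eq
  have hSinvT : (S⁻¹)ᵀ = S⁻¹ := by rw [Matrix.transpose_nonsing_inv, hSsymm]
  have hA : Sg⁻¹ = S⁻¹ * S⁻¹ := by rw [← hSS, Matrix.mul_inv_rev]
  have hAsymm : (Sg⁻¹)ᵀ = Sg⁻¹ := by
    rw [hA, Matrix.transpose_mul, hSinvT]
  have hAv : Sg⁻¹.mulVec μ = v := by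
    rw [hμ, hv, Matrix.mulVec_mulVec, hA, mul_assoc, hSinv, mul_one]
  have ht1 : x ⬝ᵥ Sg⁻¹.mulVec μ = x ⬝ᵥ v := by rw [hAv]
  have ht2 : μ ⬝ᵥ Sg⁻¹.mulVec x = x ⬝ᵥ v := by
    rw [Matrix.dotProduct_mulVec, ← Matrix.mulVec_transpose, hAsymm, hAv,
      dotProduct_comm]
  have hμμ : μ ⬝ᵥ Sg⁻¹.mulVec μ = 1 := by
    rw [hAv, hμ, hv, Matrix.dotProduct_mulVec, ← Matrix.mulVec_transpose, hSinvT,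
      Matrix.mulVec_mulVec, hSinv, Matrix.one_mulVec, hμbar]
  set q : ℝ := x ⬝ᵥ Sg⁻¹.mulVec x with hq
  set t : ℝ := x ⬝ᵥ v with ht
  have hplus : (x - μ) ⬝ᵥ Sg⁻¹.mulVec (x - μ) = q - 2 * t + 1 := by
    rw [Matrix.mulVec_sub, sub_dotProduct, dotProduct_sub,
      dotProduct_sub, ht1, ht2, hμμ]
    ring
  have hminus : (x - (-μ)) ⬝ᵥ Sg⁻¹.mulVec (x - (-μ)) = q + 2 * t + 1 := by
    rw [sub_neg_eq_add, Matrix.mulVec_add, add_dotProduct,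
      dotProduct_add, dotProduct_add, ht1, ht2, hμμ]
    ring
  have hzero : (x - 0) ⬝ᵥ Sg⁻¹.mulVec (x - 0) = q := by rw [sub_zero]
  simp only [gaussDensity, hplus, hminus, hzero]
  set C : ℝ := (2 * π) ^ (-(d : ℝ) / 2) * Sg.det ^ (-(1 : ℝ) / 2) with hC
  have hCpos : 0 < C := by
    apply mul_pos
    · exact Real.rpow_pos_of_pos (by positivity) _
    · exact Real.rpow_pos_of_pos hSg.det_pos _
  have e1 : Real.exp (-(q - 2 * t + 1) / 2) = Real.exp (-q / 2) * Real.exp (t - 1 / 2) := by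
    rw [← Real.exp_add]; ring_nf
  have e2 : Real.exp (-(q + 2 * t + 1) / 2) = Real.exp (-q / 2) * Real.exp (-t - 1 / 2) := by
    rw [← Real.exp_add]; ring_nf
  have h2e : (2 : ℝ) < Real.exp 1 := by
    have := Real.exp_one_gt_d9; linarith
  have hsum : (2 : ℝ) < Real.exp (t - 1 / 2) + Real.exp (-t - 1 / 2) := by
    rcases lt_abs.mp hx with h | h
    · have h1 : Real.exp 1 < Real.exp (t - 1 / 2) :=
        Real.exp_lt_exp.mpr (by linarith)
      have h2 : 0 < Real.exp (-t - 1 / 2) := Real.exp_pos _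
      linarith
    · have h1 : Real.exp 1 < Real.exp (-t - 1 / 2) :=
        Real.exp_lt_exp.mpr (by linarith)
      have h2 : 0 < Real.exp (t - 1 / 2) := Real.exp_pos _
      linarith
  have key : Real.exp (-q / 2) <
      1 / 2 * (Real.exp (-(q - 2 * t + 1) / 2) + Real.exp (-(q + 2 * t + 1) / 2)) := by
    rw [e1, e2]
    have h := mul_lt_mul_of_pos_left hsum (Real.exp_pos (-q / 2))
    nlinarith [Real.exp_pos (-q / 2)]
  nlinarith [mul_lt_mul_of_pos_left key hCpos, Real.exp_pos (-q / 2), hCpos]
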